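/- arXiv:1110.4654 — 3 statements merged into one kernel-verified Lean document; each statement's English description precedes it below -/
import Mathlib

section
/- Let k > 1 be an integer. Suppose g₁, g₂ : ℍ → ℂ are holomorphic, satisfy gᵢ((aτ+b)/(cτ+d)) = (cτ+d)^{2−2k} gᵢ(τ) for all [[a,b],[c,d]] ∈ SL₂(ℤ) (i = 1,2), and admit Fourier expansions gᵢ(τ) = Σ_{n≥−Nᵢ} cᵢ(n) e(nτ) (absolutely convergent on ℍ) for some Nᵢ ∈ ℕ. If c₁(−m) = c₂(−m) for every integer m ≥ 1, then g₁ = g₂. -/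
noncomputable section

open Complex Real

/-- The upper half-plane, as a subset of `ℂ`. -/
def UHP : Set ℂ := {z : ℂ | 0 < z.im}

/-- `e(z) = exp(2πiz)`. -/
def e (z : ℂ) : ℂ := Complex.exp (2 * (π : ℂ) * I * z)

open Filter Topology in
lemma norm_e (z : ℂ) : ‖e z‖ = Real.exp (-(2 * π * z.im)) := by
  rw [e, Complex.norm_exp]
  congr 1
  simp [Complex.mul_re, Complex.mul_im]

lemma e_add (a b : ℂ) : e (a + b) = e a * e b := by
  rw [e, e, e, ← Complex.exp_add]; ring_nf

lemma e_int (n : ℤ) : e n = 1 := by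
  rw [e]
  rw [show 2 * (π:ℂ) * I * n = n * (2 * π * I) by ring]
  exact Complex.exp_int_mul_two_pi_mul_I n

lemma e_nat_mul (z : ℂ) (M : ℕ) : e z ^ M = e (M * z) := by
  rw [e, e, ← Complex.exp_nat_mul]; ring_nf

lemma e_eq_one_iff (d : ℤ) (M : ℕ) (hM : 0 < M) :
    e ((d : ℂ) / M) = 1 ↔ (M : ℤ) ∣ d := by
  rw [e, Complex.exp_eq_one_iff]
  constructor
  · rintro ⟨n, hn⟩
    have hM' : (M : ℂ) ≠ 0 := Nat.cast_ne_zero.mpr hM.ne'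
    have hpi : (2 * (π:ℂ) * I) ≠ 0 := by
      simp [Real.pi_ne_zero, Complex.I_ne_zero]
    have h2 : (d : ℂ) = n * M := by
      field_simp at hn
      have h3 : (2 * (π:ℂ) * I) * (d : ℂ) = (2 * (π:ℂ) * I) * ((n:ℂ) * M) := by
        linear_combination (2 * (π:ℂ) * I) * hn
      exact mul_left_cancel₀ hpi h3
    refine ⟨n, by exact_mod_cast (h2.trans (mul_comm _ _)) ⟩
  · rintro ⟨t, rfl⟩
    refine ⟨t, ?_⟩
    have hM' : (M : ℂ) ≠ 0 := Nat.cast_ne_zero.mpr hM.ne'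
    field_simp
    push_cast
    ring

lemma char_sum (M : ℕ) (hM : 0 < M) (d : ℤ) :
    ∑ j ∈ Finset.range M, e ((d : ℂ) * (j / M)) = if (M:ℤ) ∣ d then (M:ℂ) else 0 := by
  have hM' : (M : ℂ) ≠ 0 := Nat.cast_ne_zero.mpr hM.ne'
  have key : ∀ j : ℕ, e ((d : ℂ) * (j / M)) = (e ((d:ℂ)/M)) ^ j := by
    intro j
    rw [e_nat_mul]
    congr 1
    field_simp
  simp_rw [key]
  by_cases hdvd : (M:ℤ) ∣ d
  · rw [if_pos hdvd]
    have h1 : e ((d:ℂ)/M) = 1 := (e_eq_one_iff d M hM).mpr hdvd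
    simp [h1]
  · rw [if_neg hdvd]
    have h1 : e ((d:ℂ)/M) ≠ 1 := fun h => hdvd ((e_eq_one_iff d M hM).mp h)
    rw [geom_sum_eq h1]
    have : e ((d:ℂ)/M) ^ M = 1 := by
      rw [e_nat_mul, show (M:ℂ) * ((d:ℂ)/M) = (d:ℂ) by field_simp, e_int]
    simp [this]

open Filter Topology in
lemma coeff_eq_zero (p : ℕ) (hp : 1 ≤ p) (h : ℂ → ℂ) (c : ℤ → ℂ) (C : ℝ)
    (hsum : ∀ τ ∈ UHP, HasSum (fun m : ℤ => c m * e ((m:ℂ) * τ)) (h τ))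
    (hbd : ∀ τ ∈ UHP, ‖h τ‖ ≤ C * τ.im ^ p) (n : ℤ) : c n = 0 := by
  have key : ∀ y : ℝ, 0 < y → ‖c n‖ * Real.exp (-(2*π*(n*y))) ≤ C * y^p := by
    intro y hy
    set τ0 : ℂ := I * y with hτ0def
    have him : τ0.im = y := by simp [hτ0def]
    have hτ0 : τ0 ∈ UHP := by simp [UHP, him, hy, Set.mem_setOf_eq]
    have hmem : ∀ (M : ℕ) (j : ℕ), ((j:ℂ)/M + τ0) ∈ UHP := by
      intro M j
      simp [UHP, Set.mem_setOf_eq, him, hy]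
    have himj : ∀ (M : ℕ) (j : ℕ), ((j:ℂ)/M + τ0).im = y := by
      intro M j; simp [him]
    set bound : ℤ → ℝ := fun m => ‖c m * e ((m:ℂ) * τ0)‖ with hbdef
    have hb_sum : Summable bound := summable_norm_iff.mpr (hsum τ0 hτ0).summable
    set A : ℕ → ℂ := fun M => ∑ j ∈ Finset.range M,
      h ((j:ℂ)/M + τ0) * (e (-(n:ℂ) * ((j:ℂ)/M)) / M) with hAdef
    set F : ℕ → ℤ → ℂ := fun M m =>
      if (M:ℤ) ∣ (m - n) then c m * e ((m:ℂ) * τ0) else 0 with hFdef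
    have hCy : 0 ≤ C * y ^ p := by
      have := hbd τ0 hτ0
      rw [him] at this
      exact le_trans (norm_nonneg _) this
    -- HasSum (F M) (A M) for M ≥ 1
    have hAF : ∀ M : ℕ, 0 < M → HasSum (F M) (A M) := by
      intro M hM
      have hMne : (M : ℂ) ≠ 0 := Nat.cast_ne_zero.mpr hM.ne'
      have h2 : HasSum (fun m : ℤ => ∑ j ∈ Finset.range M,
          c m * e ((m:ℂ) * ((j:ℂ)/M + τ0)) * (e (-(n:ℂ) * ((j:ℂ)/M)) / M)) (A M) :=
        hasSum_sum fun j _ => (hsum _ (hmem M j)).mul_right _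
      have h3 : (fun m : ℤ => ∑ j ∈ Finset.range M,
          c m * e ((m:ℂ) * ((j:ℂ)/M + τ0)) * (e (-(n:ℂ) * ((j:ℂ)/M)) / M)) = F M := by
        funext m
        have e1 : ∀ j : ℕ, c m * e ((m:ℂ) * ((j:ℂ)/M + τ0)) * (e (-(n:ℂ) * ((j:ℂ)/M)) / M)
            = (c m * e ((m:ℂ) * τ0) / M) * e (((m - n : ℤ):ℂ) * ((j:ℂ)/M)) := by
          intro j
          rw [show (m:ℂ) * ((j:ℂ)/M + τ0) = (m:ℂ)*((j:ℂ)/M) + (m:ℂ)*τ0 by ring, e_add,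
            show ((m - n : ℤ):ℂ) * ((j:ℂ)/M) = (m:ℂ)*((j:ℂ)/M) + (-(n:ℂ))*((j:ℂ)/M) by
              push_cast; ring, e_add]
          ring
        rw [Finset.sum_congr rfl (fun j _ => e1 j), ← Finset.mul_sum, char_sum M hM (m - n)]
        simp only [hFdef]
        by_cases hd : (M:ℤ) ∣ (m - n)
        · rw [if_pos hd, if_pos hd]; field_simp
        · rw [if_neg hd, if_neg hd, mul_zero]
      rw [← h3]; exact h2
    -- bound on A M
    have hA_bd : ∀ M : ℕ, 0 < M → ‖A M‖ ≤ C * y ^ p := by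
      intro M hM
      have hMne : (M : ℝ) ≠ 0 := Nat.cast_ne_zero.mpr hM.ne'
      have hterm : ∀ j ∈ Finset.range M,
          ‖h ((j:ℂ)/M + τ0) * (e (-(n:ℂ) * ((j:ℂ)/M)) / M)‖ ≤ (C * y ^ p) / M := by
        intro j _
        rw [norm_mul, norm_div, norm_e]
        have him0 : (-(n:ℂ) * ((j:ℂ)/M)).im = 0 := by
          simp [Complex.mul_im, Complex.div_im]
        rw [him0]
        simp only [mul_zero, neg_zero, Real.exp_zero]
        have h1 : ‖h ((j:ℂ)/M + τ0)‖ ≤ C * y ^ p := by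
          have := hbd _ (hmem M j)
          rwa [himj M j] at this
        have h2 : ‖(M:ℂ)‖ = (M:ℝ) := by simp
        rw [h2, mul_one_div]
        gcongr
      calc ‖A M‖ ≤ ∑ j ∈ Finset.range M, ‖h ((j:ℂ)/M + τ0) * (e (-(n:ℂ) * ((j:ℂ)/M)) / M)‖ :=
            norm_sum_le _ _
        _ ≤ ∑ _j ∈ Finset.range M, (C * y ^ p) / M := Finset.sum_le_sum hterm
        _ = C * y ^ p := by
            rw [Finset.sum_const, Finset.card_range, nsmul_eq_mul]
            field_simp
    -- limit of A M
    have hab : ∀ m : ℤ, Tendsto (fun M => F M m) atTop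
        (𝓝 (if m = n then c n * e ((n:ℂ) * τ0) else 0)) := by
      intro m
      by_cases hm : m = n
      · subst hm
        simp only [hFdef, sub_self, dvd_zero, if_pos, if_true]
        exact tendsto_const_nhds
      · rw [if_neg hm]
        apply Tendsto.congr' _ tendsto_const_nhds
        filter_upwards [eventually_ge_atTop ((m - n).natAbs + 1)] with M hM
        have hd : ¬ (M:ℤ) ∣ (m - n) := by
          intro hdvd
          have hne : m - n ≠ 0 := sub_ne_zero.mpr hm
          have h5 : (M:ℤ) ≤ |m - n| := Int.le_of_dvd (abs_pos.mpr hne) ((dvd_abs _ _).mpr hdvd)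
          rw [Int.abs_eq_natAbs] at h5
          omega
        simp [hFdef, hd]
    have h_bound : ∀ M : ℕ, ∀ m : ℤ, ‖F M m‖ ≤ bound m := by
      intro M m
      simp only [hFdef, hbdef]
      split
      · exact le_refl _
      · rw [norm_zero]
        exact norm_nonneg _
    have hlim0 : Tendsto (fun M => ∑' m : ℤ, F M m) atTop
        (𝓝 (∑' m : ℤ, if m = n then c n * e ((n:ℂ) * τ0) else 0)) :=
      tendsto_tsum_of_dominated_convergence hb_sum hab (Eventually.of_forall h_bound)
    have htsumG : (∑' m : ℤ, if m = n then c n * e ((n:ℂ) * τ0) else 0)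
        = c n * e ((n:ℂ) * τ0) := tsum_ite_eq n _
    have hlim : Tendsto A atTop (𝓝 (c n * e ((n:ℂ) * τ0))) := by
      rw [← htsumG]
      apply Tendsto.congr' _ hlim0
      filter_upwards [eventually_ge_atTop 1] with M hM
      exact (hAF M hM).tsum_eq
    have hfin : ‖c n * e ((n:ℂ) * τ0)‖ ≤ C * y ^ p := by
      apply le_of_tendsto (hlim.norm)
      filter_upwards [eventually_ge_atTop 1] with M hM
      exact hA_bd M hM
    have hnorm : ‖c n * e ((n:ℂ) * τ0)‖ = ‖c n‖ * Real.exp (-(2*π*(n*y))) := by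
      rw [norm_mul, norm_e]
      congr 2
      simp [hτ0def, Complex.mul_im]
    rwa [hnorm] at hfin
  -- let y → 0
  have h1 : Tendsto (fun y : ℝ => ‖c n‖ * Real.exp (-(2*π*(n*y)))) (𝓝[>] 0) (𝓝 (‖c n‖)) := by
    have hc : Continuous fun y : ℝ => ‖c n‖ * Real.exp (-(2*π*(n*y))) := by fun_prop
    have := hc.tendsto 0
    simp only [mul_zero, neg_zero, Real.exp_zero, mul_one] at this
    exact this.mono_left nhdsWithin_le_nhds
  have h2 : Tendsto (fun y : ℝ => C * y ^ p) (𝓝[>] 0) (𝓝 0) := by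
    have hc : Continuous fun y : ℝ => C * y ^ p := by fun_prop
    have := hc.tendsto 0
    rw [zero_pow (by omega : p ≠ 0), mul_zero] at this
    exact this.mono_left nhdsWithin_le_nhds
  have h3 : ‖c n‖ ≤ 0 := by
    apply le_of_tendsto_of_tendsto h1 h2
    filter_upwards [self_mem_nhdsWithin] with y hy
    exact key y hy
  simpa using le_antisymm h3 (norm_nonneg _)

/-- a weakly holomorphic modular form of weight `2 − 2k` (`k > 1`)
for `SL₂(ℤ)` is determined by its principal part: if `g₁, g₂` are holomorphic on `ℍ`,
transform with weight `2 − 2k` under `SL₂(ℤ)`, have Fourier expansions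
`gᵢ(τ) = Σ_{n ≥ −Nᵢ} cᵢ(n) e(nτ)`, and `c₁(−m) = c₂(−m)` for all `m ≥ 1`,
then `g₁ = g₂` on `ℍ`. -/
theorem stmt1 (k : ℤ) (hk : 1 < k) (g₁ g₂ : ℂ → ℂ) (N₁ N₂ : ℕ) (c₁ c₂ : ℤ → ℂ)
    (hg₁ : DifferentiableOn ℂ g₁ UHP) (hg₂ : DifferentiableOn ℂ g₂ UHP)
    (htrans₁ : ∀ γ : Matrix.SpecialLinearGroup (Fin 2) ℤ, ∀ τ ∈ UHP,
      g₁ (((γ.1 0 0 : ℂ) * τ + (γ.1 0 1 : ℂ)) / ((γ.1 1 0 : ℂ) * τ + (γ.1 1 1 : ℂ)))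
        = ((γ.1 1 0 : ℂ) * τ + (γ.1 1 1 : ℂ)) ^ (2 - 2 * k) * g₁ τ)
    (htrans₂ : ∀ γ : Matrix.SpecialLinearGroup (Fin 2) ℤ, ∀ τ ∈ UHP,
      g₂ (((γ.1 0 0 : ℂ) * τ + (γ.1 0 1 : ℂ)) / ((γ.1 1 0 : ℂ) * τ + (γ.1 1 1 : ℂ)))
        = ((γ.1 1 0 : ℂ) * τ + (γ.1 1 1 : ℂ)) ^ (2 - 2 * k) * g₂ τ)
    (hvan₁ : ∀ n : ℤ, n < -(N₁ : ℤ) → c₁ n = 0)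
    (hvan₂ : ∀ n : ℤ, n < -(N₂ : ℤ) → c₂ n = 0)
    (hsum₁ : ∀ τ ∈ UHP, HasSum (fun n : ℤ => c₁ n * e ((n : ℂ) * τ)) (g₁ τ))
    (hsum₂ : ∀ τ ∈ UHP, HasSum (fun n : ℤ => c₂ n * e ((n : ℂ) * τ)) (g₂ τ))
    (hprin : ∀ m : ℕ, 1 ≤ m → c₁ (-(m : ℤ)) = c₂ (-(m : ℤ))) :
    ∀ τ ∈ UHP, g₁ τ = g₂ τ := by
  set c : ℤ → ℂ := fun m => c₁ m - c₂ m with hcdef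
  set h : ℂ → ℂ := fun τ => g₁ τ - g₂ τ with hhdef
  have hsum : ∀ τ ∈ UHP, HasSum (fun m : ℤ => c m * e ((m:ℂ) * τ)) (h τ) := by
    intro τ hτ
    have := (hsum₁ τ hτ).sub (hsum₂ τ hτ)
    simpa [hcdef, hhdef, sub_mul] using this
  have hneg : ∀ m : ℤ, m < 0 → c m = 0 := by
    intro m hm
    have h1 : m = -(m.natAbs : ℤ) := by omega
    have h2 : 1 ≤ m.natAbs := by omega
    simp only [hcdef]
    rw [h1, hprin m.natAbs h2, sub_self]
  -- setup
  set y₀ : ℝ := Real.sqrt 3 / 2 with hy₀def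
  have hy₀pos : 0 < y₀ := by
    rw [hy₀def]; positivity
  set τ₀ : ℂ := I * (y₀ : ℝ) with hτ₀def
  have hτ₀im : τ₀.im = y₀ := by simp [hτ₀def]
  have hτ₀ : τ₀ ∈ UHP := by simp [UHP, Set.mem_setOf_eq, hτ₀im, hy₀pos]
  set B : ℝ := ∑' m : ℤ, ‖c m * e ((m:ℂ) * τ₀)‖ with hBdef
  have hbsum₀ : Summable (fun m : ℤ => ‖c m * e ((m:ℂ) * τ₀)‖) :=
    summable_norm_iff.mpr (hsum τ₀ hτ₀).summable
  -- bound on high imaginary part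
  have hfd : ∀ τ ∈ UHP, y₀ ≤ τ.im → ‖h τ‖ ≤ B := by
    intro τ hτ hyim
    have hs := hsum τ hτ
    have hns : Summable (fun m : ℤ => ‖c m * e ((m:ℂ) * τ)‖) :=
      summable_norm_iff.mpr hs.summable
    calc ‖h τ‖ = ‖∑' m : ℤ, c m * e ((m:ℂ) * τ)‖ := by rw [hs.tsum_eq]
      _ ≤ ∑' m : ℤ, ‖c m * e ((m:ℂ) * τ)‖ := norm_tsum_le_tsum_norm hns
      _ ≤ B := by
          apply Summable.tsum_le_tsum _ hns hbsum₀
          intro m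
          rcases lt_or_ge m 0 with hm | hm
          · rw [hneg m hm]; simp
          · rw [norm_mul, norm_mul, norm_e, norm_e]
            have him1 : ((m:ℂ) * τ).im = m * τ.im := by simp
            have him2 : ((m:ℂ) * τ₀).im = m * y₀ := by simp [hτ₀def]
            rw [him1, him2]
            apply mul_le_mul_of_nonneg_left _ (norm_nonneg _)
            apply Real.exp_le_exp.mpr
            have hm' : (0:ℝ) ≤ m := by exact_mod_cast hm
            have h9 : (m:ℝ) * y₀ ≤ (m:ℝ) * τ.im := mul_le_mul_of_nonneg_left hyim hm'
            nlinarith [Real.pi_pos, h9]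
  set p : ℕ := (k - 1).toNat with hpdef
  have hp1 : 1 ≤ p := by omega
  have hpk : (p : ℤ) = k - 1 := by omega
  set C : ℝ := B * (2 / Real.sqrt 3) ^ p with hCdef
  have hBnonneg : 0 ≤ B := tsum_nonneg fun m => norm_nonneg _
  -- global bound
  have hglobal : ∀ τ ∈ UHP, ‖h τ‖ ≤ C * τ.im ^ p := by
    intro τ hτ
    have hτim : 0 < τ.im := hτ
    set z : UpperHalfPlane := ⟨τ, hτim⟩ with hzdef
    obtain ⟨γ, hγ⟩ := ModularGroup.exists_smul_mem_fd z
    set w : UpperHalfPlane := γ • z with hwdef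
    have hwim : y₀ ≤ w.im := by
      have h34 := ModularGroup.three_le_four_mul_im_sq_of_mem_fd hγ
      have h4 : Real.sqrt 3 ≤ 2 * w.im := by
        have : Real.sqrt 3 ≤ Real.sqrt (4 * w.im ^ 2) := Real.sqrt_le_sqrt h34
        rwa [show (4:ℝ) * w.im ^ 2 = (2 * w.im) ^ 2 by ring,
          Real.sqrt_sq (by linarith [UpperHalfPlane.im_pos w] : (0:ℝ) ≤ 2 * w.im)] at this
      rw [hy₀def]; linarith
    set D : ℂ := (γ.1 1 0 : ℂ) * τ + (γ.1 1 1 : ℂ) with hDdef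
    have hD : UpperHalfPlane.denom γ z = D := by
      rw [ModularGroup.denom_apply, hDdef]
    have hDne : D ≠ 0 := hD ▸ UpperHalfPlane.denom_ne_zero _ _
    have hσ : ((w : ℂ)) = ((γ.1 0 0 : ℂ) * τ + (γ.1 0 1 : ℂ)) / D := by
      rw [hwdef, UpperHalfPlane.specialLinearGroup_apply]
      simp only [UpperHalfPlane.coe_mk]
      norm_num [hDdef]
      rfl
    have heq : h (w : ℂ) = D ^ (2 - 2*k) * h τ := by
      simp only [hhdef]
      rw [hσ, hDdef, htrans₁ γ τ hτ, htrans₂ γ τ hτ]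
      ring
    have hzpow : D ^ (2*k - 2) * D ^ (2 - 2*k) = 1 := by
      rw [← zpow_add₀ hDne]; norm_num
    have heq2 : h τ = D ^ (2*k - 2) * h (w : ℂ) := by
      calc h τ = (D ^ (2*k-2) * D ^ (2 - 2*k)) * h τ := by rw [hzpow, one_mul]
        _ = D ^ (2*k - 2) * h (w : ℂ) := by rw [heq]; ring
    -- norms
    have hnormD : ‖D ^ (2*k - 2)‖ = (Complex.normSq D) ^ p := by
      rw [norm_zpow, show 2*k - 2 = ((2*p : ℕ) : ℤ) by omega, zpow_natCast, pow_mul,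
        ← Complex.normSq_eq_norm_sq]
    have hwim_pos : 0 < w.im := UpperHalfPlane.im_pos w
    have hns : Complex.normSq D ≠ 0 := (Complex.normSq_pos.mpr hDne).ne'
    have hDsq : Complex.normSq D = τ.im / w.im := by
      have himw : w.im = τ.im / Complex.normSq D := by
        have h6 := ModularGroup.im_smul_eq_div_normSq γ z
        rw [hD] at h6
        exact h6
      rw [eq_div_iff hwim_pos.ne', himw, mul_comm, div_mul_cancel₀ _ hns]
    have hDle : Complex.normSq D ^ p ≤ (τ.im * (2 / Real.sqrt 3)) ^ p := by
      apply pow_le_pow_left₀ (Complex.normSq_nonneg D)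
      have h7 : τ.im / w.im ≤ τ.im / y₀ := by gcongr
      have h8 : τ.im / y₀ = τ.im * (2 / Real.sqrt 3) := by
        rw [hy₀def]
        have : Real.sqrt 3 ≠ 0 := by positivity
        field_simp
      rw [hDsq]
      rw [h8] at h7
      exact h7
    have hwmem : ((w : ℂ)) ∈ UHP := by
      simpa [UHP, Set.mem_setOf_eq] using hwim_pos
    have hwcoe : y₀ ≤ ((w : ℂ)).im := hwim
    calc ‖h τ‖ = ‖D ^ (2*k - 2)‖ * ‖h ((w:ℂ))‖ := by rw [heq2, norm_mul]
      _ = Complex.normSq D ^ p * ‖h ((w:ℂ))‖ := by rw [hnormD]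
      _ ≤ (τ.im * (2 / Real.sqrt 3)) ^ p * B :=
          mul_le_mul hDle (hfd _ hwmem hwcoe) (norm_nonneg _) (by positivity)
      _ = C * τ.im ^ p := by rw [hCdef, mul_pow]; ring
  have hczero : ∀ n : ℤ, c n = 0 := coeff_eq_zero p hp1 h c C hsum hglobal
  intro τ hτ
  have hs := hsum τ hτ
  have h0 : (fun m : ℤ => c m * e ((m:ℂ) * τ)) = fun _ => 0 := by
    funext m; rw [hczero m, zero_mul]
  rw [h0] at hs
  have hfin := hs.unique hasSum_zero
  have : g₁ τ - g₂ τ = 0 := hfin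
  exact sub_eq_zero.mp this
end
end

section
/- Let k ≥ 1 and n ≥ 1 be integers and let τ = x+iy ∈ ℍ. Then R_{−2k}^k(e(nτ)) = e(nτ) · Σ_{r=0}^k ( (k+r)! / (r!·(k−r)!) ) · n^{k−r} · (4πy)^{−r}. (This is the identity R_{−2k}^k(e(nτ)) = 2 y^{1/2} n^{k+1/2} K_{k+1/2}(2πny) e(nx) written in elementary terms via K_{k+1/2}(x) = (π/2)^{1/2} x^{−k−1/2} e^{−x} Σ_{r=0}^k ((k+r)!/(2^r r! (k−r)!)) x^{k−r}.) -/
noncomputable section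

open Complex Real

/-- The Wirtinger derivative `∂f/∂τ = (1/2)(∂f/∂x − i ∂f/∂y)`. -/
def dtau (f : ℂ → ℂ) (z : ℂ) : ℂ := (fderiv ℝ f z 1 - I * fderiv ℝ f z I) / 2

/-- The raising operator `R_w f = (1/(2πi)) (∂f/∂τ + w f/(τ − τ̄))`. -/
def Rop (w : ℤ) (f : ℂ → ℂ) : ℂ → ℂ :=
  fun z => (1 / (2 * (π : ℂ) * I)) * (dtau f z + (w : ℂ) * f z / (z - (starRingEnd ℂ) z))

/-- Iterated raising operator: `R_w^0 = id`, `R_w^{n+1} = R_{w+2n} ∘ R_w^n`. -/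
def Riter (w : ℤ) : ℕ → (ℂ → ℂ) → (ℂ → ℂ)
  | 0 => fun f => f
  | n + 1 => fun f => Rop (w + 2 * n) (Riter w n f)

/-- Normalized derivative `f^{(r)} = (2πi)^{−r} d^r f/dτ^r`. -/
def fder (r : ℕ) (f : ℂ → ℂ) : ℂ → ℂ :=
  fun z => ((2 * (π : ℂ) * I) ^ r)⁻¹ * iteratedDeriv r f z

/-- The Rankin–Cohen bracket of `f` and `g` with weight parameters `k`, `l`:
`[f,g]_r = Σ_{s=0}^r (−1)^s C(k+r−1,s) C(l+r−1,r−s) f^{(r−s)} g^{(s)}`. -/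
def RCbracket (k l r : ℕ) (f g : ℂ → ℂ) : ℂ → ℂ :=
  fun z => ∑ s ∈ Finset.range (r + 1),
    (-1 : ℂ) ^ s * (Nat.choose (k + r - 1) s : ℂ) * (Nat.choose (l + r - 1) (r - s) : ℂ) *
      fder (r - s) f z * fder s g z

/-! ### Auxiliary machinery for statement 7 -/

/-- `f` has real Fréchet derivative `L` at `z` with `L 1 = p`, `L I = q`. -/
def HasD (f : ℂ → ℂ) (z p q : ℂ) : Prop :=
  ∃ L : ℂ →L[ℝ] ℂ, HasFDerivAt f L z ∧ L 1 = p ∧ L I = q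

theorem HasD.dtau_eq {f z p q} (h : HasD f z p q) : dtau f z = (p - I * q) / 2 := by
  obtain ⟨L, hL, h1, hI⟩ := h
  rw [dtau, hL.fderiv, h1, hI]

theorem HasD.congr {f g z p q p' q'} (h : HasD f z p q) (hfg : ∀ w, f w = g w)
    (hp : p = p') (hq : q = q') : HasD g z p' q' := by
  subst hp; subst hq; rwa [show g = f from funext fun w => (hfg w).symm]

theorem HasD.mul {f g z p q p' q'} (hf : HasD f z p q) (hg : HasD g z p' q') :
    HasD (fun w => f w * g w) z (p * g z + f z * p') (q * g z + f z * q') := by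
  obtain ⟨L, hL, h1, hI⟩ := hf
  obtain ⟨M, hM, h1', hI'⟩ := hg
  refine ⟨f z • M + g z • L, hL.mul hM, ?_, ?_⟩ <;>
    simp [h1, hI, h1', hI', smul_eq_mul] <;> ring

theorem HasD.const_mul {f z p q} (hf : HasD f z p q) (c : ℂ) :
    HasD (fun w => c * f w) z (c * p) (c * q) := by
  obtain ⟨L, hL, h1, hI⟩ := hf
  exact ⟨c • L, hL.const_mul c, by simp [h1, smul_eq_mul], by simp [hI, smul_eq_mul]⟩

theorem HasD.add {f g z p q p' q'} (hf : HasD f z p q) (hg : HasD g z p' q') :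
    HasD (fun w => f w + g w) z (p + p') (q + q') := by
  obtain ⟨L, hL, h1, hI⟩ := hf
  obtain ⟨M, hM, h1', hI'⟩ := hg
  exact ⟨L + M, hL.add hM, by simp [h1, h1'], by simp [hI, hI']⟩

theorem HasD.inv {f z p q} (hf : HasD f z p q) (h0 : f z ≠ 0) :
    HasD (fun w => (f w)⁻¹) z (-(p / f z ^ 2)) (-(q / f z ^ 2)) := by
  obtain ⟨L, hL, h1, hI⟩ := hf
  refine ⟨((-ContinuousLinearMap.mulLeftRight ℝ ℂ (f z)⁻¹ (f z)⁻¹).comp L),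
    (hasFDerivAt_inv' h0).comp z hL, ?_, ?_⟩ <;>
    · simp only [ContinuousLinearMap.comp_apply, ContinuousLinearMap.neg_apply,
        ContinuousLinearMap.mulLeftRight_apply, h1, hI, neg_inj]
      rw [div_eq_mul_inv, pow_two, mul_inv]
      ring

theorem hasD_const (z c : ℂ) : HasD (fun _ => c) z 0 0 :=
  ⟨0, hasFDerivAt_const c z, by simp, by simp⟩

theorem hasD_im (z : ℂ) : HasD (fun w : ℂ => (w.im : ℂ)) z 0 1 := by
  refine ⟨Complex.ofRealCLM.comp Complex.imCLM, ?_, by simp, by simp⟩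
  exact (Complex.ofRealCLM.comp Complex.imCLM).hasFDerivAt

theorem HasD.of_hasDerivAt {f : ℂ → ℂ} {z d : ℂ} (h : HasDerivAt f d z) :
    HasD f z d (d * I) := by
  refine ⟨(ContinuousLinearMap.smulRight (1 : ℂ →L[ℂ] ℂ) d).restrictScalars ℝ,
    h.hasFDerivAt.restrictScalars ℝ, by simp, by simp [mul_comm]⟩

theorem HasD.sum {ι : Type*} {s : Finset ι} {f : ι → ℂ → ℂ} {z : ℂ} {p q : ι → ℂ}
    (h : ∀ i ∈ s, HasD (f i) z (p i) (q i)) :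
    HasD (fun w => ∑ i ∈ s, f i w) z (∑ i ∈ s, p i) (∑ i ∈ s, q i) := by
  classical
  induction s using Finset.induction_on with
  | empty => simpa using hasD_const z 0
  | @insert a s' hx ih =>
    rw [Finset.sum_insert hx, Finset.sum_insert hx]
    exact ((h a (Finset.mem_insert_self a s')).add
      (ih fun i hi => h i (Finset.mem_insert_of_mem hi))).congr
      (fun w => by rw [Finset.sum_insert hx]) rfl rfl

theorem hasDerivAt_E (n : ℕ) (z : ℂ) :
    HasDerivAt (fun w => e ((n : ℂ) * w)) (2 * π * I * n * e ((n : ℂ) * z)) z := by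
  have h : HasDerivAt (fun w : ℂ => (2 * (π : ℂ) * I * n) * w) (2 * (π : ℂ) * I * n) z := by
    simpa using (hasDerivAt_id z).const_mul (2 * (π : ℂ) * I * n)
  have h2 := h.cexp
  have hfun : (fun w : ℂ => Complex.exp (2 * (π : ℂ) * I * n * w)) = fun w => e ((n : ℂ) * w) := by
    funext w; unfold e; ring_nf
  rw [hfun] at h2
  refine h2.congr_deriv ?_
  unfold e; ring_nf

/-- `u(z) = (4π Im z)⁻¹`. -/
def uf : ℂ → ℂ := fun z => (4 * (π : ℂ) * (z.im : ℂ))⁻¹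

theorem hasD_uf {z : ℂ} (hz : 0 < z.im) : HasD uf z 0 (-(4 * π) * uf z ^ 2) := by
  have hy : (z.im : ℂ) ≠ 0 := by
    simp only [ne_eq, Complex.ofReal_eq_zero]; exact ne_of_gt hz
  have hpi : (π : ℂ) ≠ 0 := Complex.ofReal_ne_zero.2 Real.pi_ne_zero
  have h1 : HasD (fun w : ℂ => 4 * (π : ℂ) * (w.im : ℂ)) z 0 (4 * π) :=
    ((hasD_im z).const_mul (4 * π)).congr (fun w => rfl) (by ring) (by ring)
  have h0 : 4 * (π : ℂ) * (z.im : ℂ) ≠ 0 := by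
    exact mul_ne_zero (mul_ne_zero (by norm_num) hpi) hy
  exact (h1.inv h0).congr (fun w => rfl) (by simp) (by
    rw [uf]; rw [div_eq_mul_inv, ← inv_pow]; ring)

theorem hasD_Eur (n : ℕ) {z : ℂ} (hz : 0 < z.im) (r : ℕ) :
    HasD (fun w => e ((n : ℂ) * w) * uf w ^ r) z
      (2 * π * I * n * e ((n : ℂ) * z) * uf z ^ r)
      (2 * π * I * n * e ((n : ℂ) * z) * uf z ^ r * I
        - 4 * π * r * e ((n : ℂ) * z) * uf z ^ (r + 1)) := by
  induction r with
  | zero =>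
    exact ((HasD.of_hasDerivAt (hasDerivAt_E n z)).congr (fun w => by simp) (by simp)
      (by push_cast; ring))
  | succ r ih =>
    have := ih.mul (hasD_uf hz)
    refine this.congr (fun w => by ring) ?_ ?_
    · ring
    · push_cast
      ring

/-- Coefficients of `R_{-2k}^m (e(nτ)) = e(nτ) ∑_r bco k n m r (4πy)^{-r}`. -/
def bco (k n : ℕ) : ℕ → ℕ → ℂ
  | 0, r => if r = 0 then 1 else 0
  | m+1, 0 => n * bco k n m 0
  | m+1, r+1 => n * bco k n m (r+1) + ((r : ℂ) + 2*k - 2*m) * bco k n m r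

theorem bco_eq_zero (k n : ℕ) : ∀ m r, m < r → bco k n m r = 0 := by
  intro m
  induction m with
  | zero => intro r hr; simp only [bco, ite_eq_right_iff]; omega
  | succ m ih =>
    intro r hr
    match r, hr with
    | r+1, hr =>
      rw [bco, ih (r+1) (by omega), ih r (by omega)]
      ring

open Finset in
theorem sum_step (k n m : ℕ) (u : ℂ) :
    ∑ r ∈ range (m+1),
        bco k n m r * ((n : ℂ) * u ^ r + ((r : ℂ) + 2*k - 2*m) * u ^ (r+1))
      = ∑ r ∈ range (m+2), bco k n (m+1) r * u ^ r := by
  have hz := bco_eq_zero k n m (m+1) (Nat.lt_succ_self m)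
  have e1 : ∑ r ∈ range (m+2), (n : ℂ) * bco k n m r * u ^ r
      = ∑ r ∈ range (m+1), (n : ℂ) * bco k n m r * u ^ r := by
    rw [sum_range_succ, hz]; ring
  calc ∑ r ∈ range (m+1),
        bco k n m r * ((n : ℂ) * u ^ r + ((r : ℂ) + 2*k - 2*m) * u ^ (r+1))
      = (∑ r ∈ range (m+1), (n : ℂ) * bco k n m r * u ^ r)
        + ∑ r ∈ range (m+1), (((r : ℂ) + 2*k - 2*m) * bco k n m r) * u ^ (r+1) := by
        rw [← sum_add_distrib]; exact sum_congr rfl fun r _ => by ring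
    _ = (∑ r ∈ range (m+2), (n : ℂ) * bco k n m r * u ^ r)
        + ∑ r ∈ range (m+1), (((r : ℂ) + 2*k - 2*m) * bco k n m r) * u ^ (r+1) := by rw [e1]
    _ = ((∑ r ∈ range (m+1), (n : ℂ) * bco k n m (r+1) * u ^ (r+1))
          + (n : ℂ) * bco k n m 0 * u ^ 0)
        + ∑ r ∈ range (m+1), (((r : ℂ) + 2*k - 2*m) * bco k n m r) * u ^ (r+1) := by
        rw [sum_range_succ' (fun r => (n : ℂ) * bco k n m r * u ^ r) (m+1)]
    _ = (∑ r ∈ range (m+1), bco k n (m+1) (r+1) * u ^ (r+1)) + bco k n (m+1) 0 * u ^ 0 := by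
        rw [add_right_comm, ← sum_add_distrib]
        simp only [bco]
        exact congrArg₂ _ (sum_congr rfl fun r _ => by ring) (by ring)
    _ = ∑ r ∈ range (m+2), bco k n (m+1) r * u ^ r :=
        (sum_range_succ' (fun r => bco k n (m+1) r * u ^ r) (m+1)).symm

open Finset in
theorem dtau_G (n M : ℕ) (b : ℕ → ℂ) {z : ℂ} (hz : 0 < z.im) :
    dtau (fun w => e ((n : ℂ) * w) * ∑ r ∈ range M, b r * uf w ^ r) z
      = ∑ r ∈ range M, b r * (2 * π * I * n * e ((n : ℂ) * z) * uf z ^ r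
          + 2 * π * I * r * e ((n : ℂ) * z) * uf z ^ (r+1)) := by
  have h : HasD (fun w => e ((n : ℂ) * w) * ∑ r ∈ range M, b r * uf w ^ r) z
      (∑ r ∈ range M, b r * (2 * π * I * n * e ((n : ℂ) * z) * uf z ^ r))
      (∑ r ∈ range M, b r * (2 * π * I * n * e ((n : ℂ) * z) * uf z ^ r * I
        - 4 * π * r * e ((n : ℂ) * z) * uf z ^ (r + 1))) := by
    refine (HasD.sum fun r _ => (hasD_Eur n hz r).const_mul (b r)).congr
      (fun w => ?_) rfl rfl
    rw [mul_sum]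
    exact sum_congr rfl fun r _ => by ring
  rw [h.dtau_eq, Finset.mul_sum, ← sum_sub_distrib, sum_div]
  refine sum_congr rfl fun r _ => ?_
  rw [div_eq_iff (two_ne_zero (α := ℂ))]
  have h3 : (I : ℂ) ^ 3 = -I := by
    rw [pow_succ, Complex.I_sq]; ring
  ring_nf
  rw [h3]
  ring

open Finset in
theorem riter_formula (k n : ℕ) : ∀ m, ∀ τ ∈ UHP,
    Riter (-(2 * (k : ℤ))) m (fun z => e ((n : ℂ) * z)) τ
      = e ((n : ℂ) * τ) * ∑ r ∈ range (m+1), bco k n m r * uf τ ^ r := by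
  intro m
  induction m with
  | zero =>
    intro τ hτ
    simp [Riter, bco]
  | succ m ih =>
    intro τ hτ
    have hτ' : 0 < τ.im := hτ
    have hUopen : IsOpen UHP := isOpen_lt continuous_const Complex.continuous_im
    have hEq : (Riter (-(2 * (k : ℤ))) m (fun z => e ((n : ℂ) * z)))
        =ᶠ[nhds τ] (fun w => e ((n : ℂ) * w) * ∑ r ∈ range (m+1), bco k n m r * uf w ^ r) :=
      Filter.eventuallyEq_of_mem (hUopen.mem_nhds hτ) (fun w hw => ih w hw)
    have hdtau : dtau (Riter (-(2 * (k : ℤ))) m (fun z => e ((n : ℂ) * z))) τ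
        = dtau (fun w => e ((n : ℂ) * w) * ∑ r ∈ range (m+1), bco k n m r * uf w ^ r) τ := by
      unfold dtau; rw [hEq.fderiv_eq]
    show Rop (-(2 * (k : ℤ)) + 2 * m) _ τ = _
    rw [Rop]
    rw [hdtau, dtau_G n (m+1) (bco k n m) hτ', ih τ hτ]
    rw [← sum_step k n m (uf τ), Complex.sub_conj]
    have hy : (τ.im : ℂ) ≠ 0 := by
      simp only [ne_eq, Complex.ofReal_eq_zero]; exact ne_of_gt hτ'
    have hpi : (π : ℂ) ≠ 0 := Complex.ofReal_ne_zero.2 Real.pi_ne_zero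
    have hsplit : ((-(2 * (k : ℤ)) + 2 * m : ℤ) : ℂ)
          * ((e ((n : ℂ) * τ) * ∑ r ∈ range (m+1), bco k n m r * uf τ ^ r))
          / (((2 * τ.im : ℝ) : ℂ) * I)
        = ∑ r ∈ range (m+1), ((-(2 * (k : ℤ)) + 2 * m : ℤ) : ℂ)
            * (e ((n : ℂ) * τ) * (bco k n m r * uf τ ^ r)) / (((2 * τ.im : ℝ) : ℂ) * I) := by
      rw [Finset.mul_sum, mul_sum, ← sum_div]
    have hrel : (((2 * τ.im : ℝ) : ℂ) * I)⁻¹ = -(2 * (π : ℂ) * I) * uf τ := by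
      rw [uf]
      push_cast
      have hI : (I : ℂ) ≠ 0 := Complex.I_ne_zero
      field_simp
      ring_nf
      rw [Complex.I_sq]
      ring
    rw [hsplit, ← sum_add_distrib, Finset.mul_sum, mul_sum]
    refine sum_congr rfl fun r _ => ?_
    simp only [div_eq_mul_inv]
    rw [hrel]
    push_cast
    have hI : (I : ℂ) ≠ 0 := Complex.I_ne_zero
    field_simp
    ring

theorem key_nat (m r A : ℕ) (hrm : r ≤ m) (hA : m ≤ A) :
    (m+1).choose (r+1) * A = m.choose (r+1) * (A+r+1) + (A + r - m) * m.choose r := by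
  obtain ⟨s, rfl⟩ := Nat.exists_eq_add_of_le hrm
  obtain ⟨B, rfl⟩ := Nat.exists_eq_add_of_le hA
  have pascal := Nat.choose_succ_succ' (r+s) r
  have h1 := Nat.choose_succ_right_eq (r+s) r
  rw [Nat.add_sub_cancel_left] at h1
  have hsub : r + s + B + r - (r + s) = B + r := by omega
  rw [hsub]
  zify at pascal h1 ⊢
  linear_combination ((r : ℤ) + s + B) * pascal - h1

theorem bco_closed (k n : ℕ) : ∀ m, m ≤ k → ∀ r,
    bco k n m r * ((2*k - m).factorial : ℂ)
      = (m.choose r : ℂ) * ((2*k - m + r).factorial : ℂ) * (n : ℂ) ^ (m - r) := by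
  intro m
  induction m with
  | zero =>
    intro _ r
    rcases r with _ | r
    · simp [bco]
    · simp [bco, Nat.choose_eq_zero_of_lt (Nat.succ_pos r)]
  | succ m ih =>
    intro hm r
    have hmk : m ≤ k := by omega
    set a := 2*k - (m+1) with ha
    have h2k : 2*k - m = a + 1 := by omega
    have h2k' : 2*k = a + 1 + m := by omega
    have hfa : (((a+1).factorial : ℕ) : ℂ) = ((a:ℂ)+1) * ((a.factorial : ℕ) : ℂ) := by
      rw [Nat.factorial_succ]; push_cast; ring
    have hfane : (((a+1).factorial : ℕ) : ℂ) ≠ 0 :=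
      Nat.cast_ne_zero.mpr (Nat.factorial_ne_zero _)
    have hane : ((a:ℂ)+1) ≠ 0 := by
      exact_mod_cast (Nat.cast_ne_zero (R := ℂ)).mpr (Nat.succ_ne_zero a)
    rcases r with _ | r
    · -- r = 0
      have ihv := ih hmk 0
      rw [h2k] at ihv
      simp only [Nat.choose_zero_right, Nat.cast_one, one_mul, Nat.sub_zero, Nat.add_zero] at ihv ⊢
      have hb : bco k n m 0 = (n : ℂ) ^ m :=
        mul_right_cancel₀ hfane (ihv.trans (mul_comm _ _))
      show ((n : ℂ) * bco k n m 0) * _ = _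
      rw [hb]
      push_cast
      ring
    · -- r+1
      by_cases hrm : r ≤ m
      · have key := key_nat m r (a+1) hrm (by omega)
        have keyC : ((m+1).choose (r+1) : ℂ) * ((a:ℂ)+1)
            = (m.choose (r+1) : ℂ) * ((a:ℂ)+1+(r:ℂ)+1)
              + (((a:ℂ)+1+(r:ℂ)) - (m:ℂ)) * (m.choose r : ℂ) := by
          have hcast : ((a + 1 + r - m : ℕ) : ℂ) = ((a:ℂ)+1+(r:ℂ)) - (m:ℂ) := by
            rw [Nat.cast_sub (by omega)]; push_cast; ring
          calc ((m+1).choose (r+1) : ℂ) * ((a:ℂ)+1)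
              = (((m+1).choose (r+1) * (a+1) : ℕ) : ℂ) := by push_cast; ring
            _ = ((m.choose (r+1) * (a+1+r+1) + (a + 1 + r - m) * m.choose r : ℕ) : ℂ) := by
                rw [key]
            _ = _ := by push_cast [hcast]; ring
        have ih1 := ih hmk (r+1)
        have ih2 := ih hmk r
        rw [h2k] at ih1 ih2
        have hcoef : ((r : ℂ) + 2*(k:ℕ) - 2*(m:ℕ)) = ((a:ℂ)+1+(r:ℂ)) - (m:ℂ) := by
          have : ((2*k : ℕ) : ℂ) = (a:ℂ) + 1 + (m:ℂ) := by exact_mod_cast congrArg (Nat.cast (R := ℂ)) h2k'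
          push_cast at this ⊢
          linear_combination this
        show ((n:ℂ) * bco k n m (r+1) + ((r:ℂ) + 2*(k:ℕ) - 2*(m:ℕ)) * bco k n m r) * _ = _
        rw [hcoef]
        apply mul_left_cancel₀ hane
        have hidx1 : a + 1 + (r + 1) = a + r + 2 := by omega
        have hidx2 : a + 1 + r = a + r + 1 := by omega
        have hidx3 : a + (r + 1) = a + r + 1 := by omega
        rw [hidx1] at ih1
        rw [hidx2] at ih2
        rw [hidx3]
        have hsub1 : m + 1 - (r + 1) = m - r := by omega
        rw [hsub1]
        have hfs : (((a+r+2).factorial : ℕ) : ℂ) = ((a:ℂ)+(r:ℂ)+2) * ((a+r+1).factorial : ℕ) := by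
          have : (a+r+2) = (a+r+1) + 1 := by omega
          rw [this, Nat.factorial_succ]; push_cast; ring
        rcases Nat.lt_or_ge r m with hlt | hge
        · have hpow : (n:ℂ) * (n:ℂ) ^ (m - (r+1)) = (n:ℂ) ^ (m - r) := by
            rw [← pow_succ']
            congr 1
            omega
          rw [hfs] at ih1
          linear_combination ((n:ℂ)) * ih1 + (((a:ℂ)+1+(r:ℂ)) - (m:ℂ)) * ih2
            - ((n:ℂ) * bco k n m (r+1) + (((a:ℂ)+1+(r:ℂ)) - (m:ℂ)) * bco k n m r) * hfa
            + ((m.choose (r+1) : ℂ) * ((a:ℂ)+(r:ℂ)+2) * (((a+r+1).factorial : ℕ) : ℂ)) * hpow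
            - ((n:ℂ)^(m-r) * (((a+r+1).factorial : ℕ) : ℂ)) * keyC
        · -- r = m
          have hrm' : r = m := by omega
          subst hrm'
          have hz1 : bco k n r (r+1) = 0 := bco_eq_zero k n r (r+1) (Nat.lt_succ_self r)
          have hch : ((r+1).choose (r+1) : ℂ) = 1 := by simp
          have hch2 : (r.choose (r+1) : ℂ) = 0 := by
            simp [Nat.choose_eq_zero_of_lt (Nat.lt_succ_self r)]
          simp only [Nat.choose_self, Nat.cast_one, Nat.sub_self, pow_zero, mul_one, one_mul]
            at ih2 ⊢
          rw [hz1]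
          linear_combination ((a:ℂ)+1) * ih2 - (((a:ℂ)+1) * bco k n r r) * hfa
      · -- r > m : both sides vanish
        have h0 : bco k n (m+1) (r+1) = 0 := bco_eq_zero k n (m+1) (r+1) (by omega)
        rw [h0, Nat.choose_eq_zero_of_lt (by omega)]
        simp

/-- for integers `k, n ≥ 1` and `τ = x + iy ∈ ℍ`,
`R_{−2k}^k(e(nτ)) = e(nτ) · Σ_{r=0}^k ((k+r)!/(r!(k−r)!)) n^{k−r} (4πy)^{−r}`,
the elementary form of the Bessel-function identity
`R_{−2k}^k(e(nτ)) = 2 y^{1/2} n^{k+1/2} K_{k+1/2}(2πny) e(nx)`. -/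
theorem stmt7 (k n : ℕ) (hk : 1 ≤ k) (hn : 1 ≤ n) :
    ∀ τ ∈ UHP,
      Riter (-(2 * (k : ℤ))) k (fun z => e ((n : ℂ) * z)) τ
        = e ((n : ℂ) * τ) *
            ∑ r ∈ Finset.range (k + 1),
              (((k + r).factorial : ℂ) / ((r.factorial : ℂ) * ((k - r).factorial : ℂ))) *
                (n : ℂ) ^ (k - r) * (4 * (π : ℂ) * (τ.im : ℂ)) ^ (-(r : ℤ)) := by
  intro τ hτ
  rw [riter_formula k n k τ hτ]
  congr 1
  refine Finset.sum_congr rfl fun r hr => ?_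
  have hrk : r ≤ k := by
    simpa using Nat.lt_succ_iff.mp (Finset.mem_range.mp hr)
  -- coefficient
  have hb := bco_closed k n k le_rfl r
  have hkk : 2*k - k = k := by omega
  rw [hkk] at hb
  have hfkne : ((k.factorial : ℕ) : ℂ) ≠ 0 := Nat.cast_ne_zero.mpr (Nat.factorial_ne_zero _)
  have hch := Nat.choose_mul_factorial_mul_factorial hrk
  have hchC : (k.choose r : ℂ) * (r.factorial : ℕ) * ((k-r).factorial : ℕ)
      = ((k.factorial : ℕ) : ℂ) := by exact_mod_cast congrArg (Nat.cast (R := ℂ)) hch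
  have hbco : bco k n k r
      = ((k + r).factorial : ℂ) / ((r.factorial : ℂ) * ((k - r).factorial : ℂ)) * (n : ℂ) ^ (k - r) := by
    have hrne : ((r.factorial : ℕ) : ℂ) ≠ 0 := Nat.cast_ne_zero.mpr (Nat.factorial_ne_zero _)
    have hkrne : (((k-r).factorial : ℕ) : ℂ) ≠ 0 := Nat.cast_ne_zero.mpr (Nat.factorial_ne_zero _)
    have hmain : bco k n k r * ((r.factorial : ℂ) * ((k-r).factorial : ℂ))
        = ((k+r).factorial : ℂ) * (n : ℂ) ^ (k-r) := by
      apply mul_right_cancel₀ hfkne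
      linear_combination ((r.factorial : ℂ) * ((k-r).factorial : ℂ)) * hb
        + (((k+r).factorial : ℂ) * (n : ℂ)^(k-r)) * hchC
    field_simp
    linear_combination hmain
  -- power
  have hzpow : (4 * (π : ℂ) * (τ.im : ℂ)) ^ (-(r : ℤ)) = uf τ ^ r := by
    rw [zpow_neg, zpow_natCast, uf, inv_pow]
  rw [hbco, hzpow]
end
end

section
/- In the lattice setting, let pr₁ : V → V₁ denote the projection along V₂. Then pr₁(L') = N', i.e. the image of the dual lattice L' under the orthogonal projection onto V₁ is exactly the dual lattice of N = L ∩ V₁ inside V₁. -/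
noncomputable section

lemma aux_unit {W : Type*} [AddCommGroup W] [Module ℚ W] (d : nonZeroDivisors ℤ) :
    IsUnit ((algebraMap ℤ (Module.End ℤ W)) (d : ℤ)) := by
  rw [Module.End.isUnit_iff]
  have hd : ((d : ℤ) : ℚ) ≠ 0 := Int.cast_ne_zero.mpr (nonZeroDivisors.coe_ne_zero d)
  have key : ∀ x : W, (algebraMap ℤ (Module.End ℤ W)) (d : ℤ) x = ((d : ℤ) : ℚ) • x := by
    intro x; rw [Module.algebraMap_end_apply, Int.cast_smul_eq_zsmul]
  constructor
  · intro x y hxy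
    rw [key, key] at hxy
    exact smul_right_injective W hd hxy
  · intro x
    exact ⟨((d : ℤ) : ℚ)⁻¹ • x, by rw [key, smul_smul, mul_inv_cancel₀ hd, one_smul]⟩

lemma aux_smul_mem {V : Type*} [AddCommGroup V] [Module ℚ V]
    (L : Submodule ℤ V) {x : V} (hx : x ∈ Submodule.span ℚ (L : Set V)) :
    ∃ d : ℤ, d ≠ 0 ∧ (d : ℚ) • x ∈ L := by
  induction hx using Submodule.span_induction with
  | mem x h => exact ⟨1, one_ne_zero, by simpa using h⟩
  | zero => exact ⟨1, one_ne_zero, by simp⟩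
  | add x y _ _ hx hy =>
    obtain ⟨d, hd, hdx⟩ := hx
    obtain ⟨e, he, hey⟩ := hy
    refine ⟨d * e, mul_ne_zero hd he, ?_⟩
    have : ((d * e : ℤ) : ℚ) • (x + y) = e • ((d : ℚ) • x) + d • ((e : ℚ) • y) := by
      rw [← Int.cast_smul_eq_zsmul ℚ e ((d:ℚ) • x), ← Int.cast_smul_eq_zsmul ℚ d ((e:ℚ) • y)]
      push_cast
      module
    rw [this]
    exact L.add_mem (L.smul_mem e hdx) (L.smul_mem d hey)
  | smul q x _ hx =>
    obtain ⟨d, hd, hdx⟩ := hx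
    rcases eq_or_ne q 0 with rfl | hq
    · exact ⟨1, one_ne_zero, by simp⟩
    · refine ⟨(q.den : ℤ) * d, mul_ne_zero (Int.natCast_ne_zero.mpr q.den_nz) hd, ?_⟩
      have hden : ((q.den : ℚ)) * q = (q.num : ℚ) := by
        exact Rat.den_mul_eq_num q
      have : (((q.den : ℤ) * d : ℤ) : ℚ) • (q • x) = q.num • ((d : ℚ) • x) := by
        rw [← Int.cast_smul_eq_zsmul ℚ q.num ((d:ℚ) • x), smul_smul, smul_smul]
        congr 1
        push_cast
        linear_combination (d : ℚ) * hden
      rw [this]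
      exact L.smul_mem q.num hdx

/-- in the lattice setting (rational quadratic space `V = V₁ ⊥ V₂`,
nondegenerate symmetric form, even full-rank lattice `L`), the image of the dual
lattice `L'` under the orthogonal projection `pr₁ : V → V₁` (projection along `V₂`)
is exactly the dual lattice `N'` of `N = L ∩ V₁` inside `V₁`. -/
theorem stmt14
    (V : Type*) [AddCommGroup V] [Module ℚ V] [FiniteDimensional ℚ V]
    (B : V →ₗ[ℚ] V →ₗ[ℚ] ℚ)
    (hsymm : ∀ x y : V, B x y = B y x)
    (hnd : ∀ v : V, (∀ w : V, B v w = 0) → v = 0)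
    (V₁ V₂ : Submodule ℚ V) (hcompl : IsCompl V₁ V₂)
    (horth : ∀ x ∈ V₁, ∀ y ∈ V₂, B x y = 0)
    (L : Submodule ℤ V) (hLfg : L.FG)
    (hLspan : Submodule.span ℚ (L : Set V) = ⊤)
    (heven : ∀ l ∈ L, ∃ n : ℤ, B l l = 2 * (n : ℚ)) :
    (fun v : V => ((Submodule.linearProjOfIsCompl V₁ V₂ hcompl v : V₁) : V)) ''
        {v : V | ∀ l ∈ L, ∃ n : ℤ, B v l = (n : ℚ)}
      = {v : V | v ∈ V₁ ∧ ∀ x ∈ (L : Set V) ∩ (V₁ : Set V), ∃ n : ℤ, B v x = (n : ℚ)} := by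
  classical
  set pr := Submodule.linearProjOfIsCompl V₁ V₂ hcompl with hprdef
  -- every element decomposes
  have hsub : ∀ x : V, x - (pr x : V) ∈ V₂ := by
    intro x
    have h := Submodule.projection_add_projection_eq_self hcompl x
    have h2 : x - (pr x : V) = (V₂.linearProjOfIsCompl V₁ hcompl.symm x : V) :=
      sub_eq_iff_eq_add'.mpr h.symm
    rw [h2]
    exact Submodule.coe_mem _
  -- B of something in V₁ with anything in V₂ vanishes on either side
  have horth' : ∀ x ∈ V₂, ∀ y ∈ V₁, B x y = 0 := fun x hx y hy => by
    rw [hsymm]; exact horth y hy x hx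
  ext w
  simp only [Set.mem_image, Set.mem_setOf_eq]
  constructor
  · rintro ⟨v, hv, rfl⟩
    refine ⟨(pr v).2, ?_⟩
    rintro x ⟨hxL, hxV₁⟩
    obtain ⟨n, hn⟩ := hv x hxL
    refine ⟨n, ?_⟩
    have h0 : B (v - (pr v : V)) x = 0 := horth' _ (hsub v) x hxV₁
    have : B ((pr v : V)) x = B v x - B (v - (pr v : V)) x := by
      rw [map_sub, LinearMap.sub_apply]; ring
    rw [this, h0, hn]; ring
  · rintro ⟨hwV₁, hw⟩
    -- `N = L ∩ V₁` viewed as a submodule of `L`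
    set P : Submodule ℤ ↥L := (V₁.restrictScalars ℤ).comap L.subtype with hPdef
    haveI : Module.Finite ℤ ↥L := Module.Finite.iff_fg.mpr hLfg
    haveI : NoZeroSMulDivisors ℤ (↥L ⧸ P) := by
      refine ⟨fun {c x} hcx => ?_⟩
      rcases eq_or_ne c 0 with rfl | hc
      · exact Or.inl rfl
      refine Or.inr ?_
      obtain ⟨l, rfl⟩ := P.mkQ_surjective x
      rw [← map_smul] at hcx
      rw [Submodule.mkQ_apply, Submodule.Quotient.mk_eq_zero] at hcx ⊢
      -- hcx : c • l ∈ P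
      have h1 : ((c : ℚ)) • (l : V) ∈ V₁ := by
        have h2 : ((c • l : ↥L) : V) ∈ V₁ := hcx
        rw [Submodule.coe_smul] at h2
        rwa [← Int.cast_smul_eq_zsmul ℚ] at h2
      have h2 : (l : V) ∈ V₁ := by
        have := V₁.smul_mem ((c : ℚ)⁻¹) h1
        rwa [smul_smul, inv_mul_cancel₀ (by exact_mod_cast hc), one_smul] at this
      rw [hPdef, Submodule.mem_comap]
      exact h2
    haveI : Module.Free ℤ (↥L ⧸ P) := Module.free_of_finite_type_torsion_free'
    obtain ⟨s, hs⟩ := Module.projective_lifting_property P.mkQ LinearMap.id P.mkQ_surjective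
    set t : ↥L →ₗ[ℤ] V := L.subtype ∘ₗ (LinearMap.id - s ∘ₗ P.mkQ) with htdef
    have htval : ∀ l : ↥L, t l = ((l - s (P.mkQ l) : ↥L) : V) := by
      intro l
      simp [htdef]
    have htL : ∀ l : ↥L, t l ∈ L := fun l => by rw [htval]; exact Submodule.coe_mem _
    have htP : ∀ l : ↥L, l - s (P.mkQ l) ∈ P := by
      intro l
      have h0 : P.mkQ (l - s (P.mkQ l)) = 0 := by
        rw [map_sub]
        have h1 := LinearMap.congr_fun hs (P.mkQ l)
        simp only [LinearMap.comp_apply, LinearMap.id_apply] at h1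
        rw [h1, sub_self]
      rwa [Submodule.mkQ_apply, Submodule.Quotient.mk_eq_zero] at h0
    have htV₁ : ∀ l : ↥L, t l ∈ V₁ := by
      intro l
      rw [htval]
      exact htP l
    set ψ : ↥L →ₗ[ℤ] ℚ := ((B w).restrictScalars ℤ) ∘ₗ t with hψdef
    have hψint : ∀ l : ↥L, ∃ n : ℤ, ψ l = (n : ℚ) := fun l => hw (t l) ⟨htL l, htV₁ l⟩
    have hψV₁ : ∀ l : ↥L, (l : V) ∈ V₁ → ψ l = B w l := by
      intro l hl
      have hP : l ∈ P := by rw [hPdef, Submodule.mem_comap]; exact hl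
      have h0 : P.mkQ l = 0 := by rw [Submodule.mkQ_apply, Submodule.Quotient.mk_eq_zero]; exact hP
      simp [hψdef, htdef, h0]
    haveI hloc : IsLocalizedModule (nonZeroDivisors ℤ) L.subtype := by
      refine ⟨fun d => aux_unit d, ?_, ?_⟩
      · intro y
        obtain ⟨d, hd0, hdy⟩ := aux_smul_mem L (x := y) (by rw [hLspan]; exact Submodule.mem_top)
        refine ⟨(⟨(d : ℚ) • y, hdy⟩, ⟨d, mem_nonZeroDivisors_of_ne_zero hd0⟩), ?_⟩
        show (⟨d, _⟩ : nonZeroDivisors ℤ) • y = ((⟨(d : ℚ) • y, hdy⟩ : ↥L) : V)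
        rw [Submonoid.smul_def]
        exact (Int.cast_smul_eq_zsmul ℚ d y).symm
      · intro x₁ x₂ h
        exact ⟨1, by rw [Subtype.ext h]⟩
    set g' : V →ₗ[ℤ] ℚ :=
      IsLocalizedModule.lift (nonZeroDivisors ℤ) L.subtype ψ (fun d => aux_unit d) with hg'def
    have hg' : ∀ l : ↥L, g' (l : V) = ψ l := fun l =>
      IsLocalizedModule.lift_apply (nonZeroDivisors ℤ) L.subtype ψ (fun d => aux_unit d) l
    set g : V →ₗ[ℚ] ℚ := (g'.toAddMonoidHom).toRatLinearMap with hgdef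
    have hg : ∀ x : V, g x = g' x := fun x => rfl
    have hndB : LinearMap.BilinForm.Nondegenerate B :=
      ⟨fun v hv => hnd v hv, fun v hv => hnd v (fun u => by rw [hsymm]; exact hv u)⟩
    set v := (LinearMap.BilinForm.toDual B hndB).symm g with hvdef
    have hBv : ∀ x : V, B v x = g x := fun x =>
      LinearMap.BilinForm.apply_toDual_symm_apply g x
    have hagree : ∀ x ∈ V₁, g x = B w x := by
      intro x hx
      obtain ⟨d, hd0, hdL⟩ := aux_smul_mem L (x := x) (by rw [hLspan]; exact Submodule.mem_top)
      have hdx1 : (d : ℚ) • x ∈ V₁ := V₁.smul_mem _ hx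
      have h1 : g ((d : ℚ) • x) = ψ ⟨(d : ℚ) • x, hdL⟩ := by rw [hg]; exact hg' ⟨_, hdL⟩
      have h2 : ψ ⟨(d : ℚ) • x, hdL⟩ = B w ((d : ℚ) • x) := hψV₁ _ hdx1
      have h3 : (d : ℚ) * g x = (d : ℚ) * B w x := by
        have h4 := h1.trans h2
        simpa [map_smul, smul_eq_mul] using h4
      exact mul_left_cancel₀ (Int.cast_ne_zero.mpr hd0) h3
    have hint : ∀ l ∈ L, ∃ n : ℤ, B v l = (n : ℚ) := by
      intro l hl
      obtain ⟨n, hn⟩ := hψint ⟨l, hl⟩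
      exact ⟨n, by rw [hBv, hg, hg' ⟨l, hl⟩]; exact hn⟩
    set a : V := ((pr (v - w) : V)) with hadef
    have haV₁ : a ∈ V₁ := Submodule.coe_mem _
    have hB_a : ∀ z : V, B a z = 0 := by
      have hV₁0 : ∀ x ∈ V₁, B a x = 0 := by
        intro x hx
        have hvw : B (v - w) x = 0 := by
          rw [map_sub, LinearMap.sub_apply, hBv, hagree x hx]; ring
        have hrest : B ((v - w) - a) x = 0 := horth' _ (hsub (v - w)) x hx
        have heq : B a x = B (v - w) x - B ((v - w) - a) x := by
          simp only [map_sub, LinearMap.sub_apply]; ring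
        rw [heq, hvw, hrest]; ring
      intro z
      have hz : (pr z : V) + (V₂.linearProjOfIsCompl V₁ hcompl.symm z : V) = z :=
        Submodule.projection_add_projection_eq_self hcompl z
      calc B a z = B a ((pr z : V)) + B a ((V₂.linearProjOfIsCompl V₁ hcompl.symm z : V)) := by
            rw [← map_add, hz]
        _ = 0 := by
            rw [hV₁0 _ (Submodule.coe_mem _), horth a haV₁ _ (Submodule.coe_mem _)]; ring
    have ha0 : pr (v - w) = 0 := by
      have := hnd a hB_a
      exact Subtype.ext this
    refine ⟨v, hint, ?_⟩
    have hprw : pr w = ⟨w, hwV₁⟩ :=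
      Submodule.linearProjOfIsCompl_apply_left hcompl ⟨w, hwV₁⟩
    show ((pr v : V₁) : V) = w
    have hsplit : pr v = pr w + pr (v - w) := by
      rw [← map_add]; congr 1; abel
    rw [hsplit, ha0, add_zero, hprw]
end
end
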